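/- First-order unification: any two first-order terms that have a common instance have a most general unifier; i.e., if there exists a substitution τ with s·τ = t·τ, then there exists a substitution σ with s·σ = t·σ such that every unifier of s and t factors through σ (for every unifier τ there is a substitution ρ with τ = σ∘ρ on the variables of s and t). -/

import Mathlib

/-- First-order terms over function symbols `F` with arities `ar`, variables in `ℕ`. -/
inductive Tm (F : Type) (ar : F → ℕ) : Type where
  | var : ℕ → Tm F ar
  | fn : (f : F) → (Fin (ar f) → Tm F ar) → Tm F ar

variable {F : Type} {ar : F → ℕ}

/-- Apply a substitution (a map from variables to terms) to a term. -/
def substTm (σ : ℕ → Tm F ar) : Tm F ar → Tm F ar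
  | .var n => σ n
  | .fn f args => .fn f (fun i => substTm σ (args i))

/-- The variables occurring in a term. -/
def fvTm : Tm F ar → Set ℕ
  | .var n => {n}
  | .fn _ args => ⋃ i, fvTm (args i)

/- auxiliary development -/

def varsTm : Tm F ar → Finset ℕ
  | .var n => {n}
  | .fn _ args => Finset.univ.biUnion (fun i => varsTm (args i))

def sizeTm : Tm F ar → ℕ
  | .var _ => 1
  | .fn _ args => 1 + ∑ i, sizeTm (args i)

lemma substTm_comp (σ τ : ℕ → Tm F ar) (u : Tm F ar) :
    substTm τ (substTm σ u) = substTm (fun v => substTm τ (σ v)) u := by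
  induction u with
  | var n => rfl
  | fn f a ih => simp [substTm, ih]

lemma substTm_congr {σ σ' : ℕ → Tm F ar} (u : Tm F ar)
    (h : ∀ v ∈ varsTm u, σ v = σ' v) : substTm σ u = substTm σ' u := by
  induction u with
  | var n => exact h n (by simp [varsTm])
  | fn f a ih =>
    simp only [substTm, Tm.fn.injEq, heq_eq_eq, true_and]
    funext i
    exact ih i (fun v hv => h v (by simp [varsTm]; exact ⟨i, hv⟩))

lemma substTm_var_id (u : Tm F ar) : substTm Tm.var u = u := by
  induction u with
  | var n => rfl
  | fn f a ih => simp [substTm, ih]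

lemma size_le_subst {x : ℕ} {u : Tm F ar} (σ : ℕ → Tm F ar) (h : x ∈ varsTm u) :
    sizeTm (σ x) ≤ sizeTm (substTm σ u) := by
  induction u with
  | var n => simp [varsTm] at h; subst h; rfl
  | fn f a ih =>
    simp [varsTm] at h
    obtain ⟨i, hi⟩ := h
    refine le_trans (ih i hi) ?_
    simp only [substTm, sizeTm]
    have h1 : sizeTm (substTm σ (a i)) ≤ ∑ j, sizeTm (substTm σ (a j)) :=
      Finset.single_le_sum (f := fun j => sizeTm (substTm σ (a j)))
        (fun j _ => Nat.zero_le _) (Finset.mem_univ i)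
    omega

lemma vars_subst (σ : ℕ → Tm F ar) (u : Tm F ar) {v : ℕ}
    (hv : v ∈ varsTm (substTm σ u)) : ∃ w ∈ varsTm u, v ∈ varsTm (σ w) := by
  induction u with
  | var n => exact ⟨n, by simp [varsTm], hv⟩
  | fn f a ih =>
    simp [substTm, varsTm] at hv
    obtain ⟨i, hi⟩ := hv
    obtain ⟨w, hw, hvw⟩ := ih i hi
    exact ⟨w, by simp [varsTm]; exact ⟨i, hw⟩, hvw⟩

def varsE : List (Tm F ar × Tm F ar) → Finset ℕ
  | [] => ∅
  | p :: E => varsTm p.1 ∪ varsTm p.2 ∪ varsE E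

def sizeE : List (Tm F ar × Tm F ar) → ℕ
  | [] => 0
  | p :: E => sizeTm p.1 + sizeTm p.2 + sizeE E

lemma mem_varsE {v : ℕ} : ∀ {E : List (Tm F ar × Tm F ar)},
    v ∈ varsE E ↔ ∃ p ∈ E, v ∈ varsTm p.1 ∨ v ∈ varsTm p.2
  | [] => by simp [varsE]
  | p :: E => by
    simp only [varsE, Finset.mem_union, mem_varsE (E := E), List.mem_cons]
    constructor
    · rintro ((h | h) | ⟨q, hq, h⟩)
      · exact ⟨p, Or.inl rfl, Or.inl h⟩
      · exact ⟨p, Or.inl rfl, Or.inr h⟩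
      · exact ⟨q, Or.inr hq, h⟩
    · rintro ⟨q, (rfl | hq), h⟩
      · exact Or.inl (by tauto)
      · exact Or.inr ⟨q, hq, h⟩

def Unif (τ : ℕ → Tm F ar) (E : List (Tm F ar × Tm F ar)) : Prop :=
  ∀ p ∈ E, substTm τ p.1 = substTm τ p.2

def IsMGU (E : List (Tm F ar × Tm F ar)) (σ : ℕ → Tm F ar) : Prop :=
  Unif σ E ∧ ∀ τ, Unif τ E → ∃ ρ, ∀ v, τ v = substTm ρ (σ v)

lemma unif_cons {τ : ℕ → Tm F ar} {p : Tm F ar × Tm F ar} {E} :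
    Unif τ (p :: E) ↔ substTm τ p.1 = substTm τ p.2 ∧ Unif τ E := by
  simp [Unif]

/-- single-variable substitution -/
def sub1 (x : ℕ) (t : Tm F ar) : ℕ → Tm F ar :=
  fun v => if v = x then t else .var v

lemma sub1_self (x : ℕ) (t : Tm F ar) : sub1 x t x = t := by simp [sub1]

lemma sub1_ne {x v : ℕ} (t : Tm F ar) (h : v ≠ x) : sub1 x t v = .var v := by simp [sub1, h]

def mapSub (σ : ℕ → Tm F ar) (E : List (Tm F ar × Tm F ar)) : List (Tm F ar × Tm F ar) :=
  E.map (fun p => (substTm σ p.1, substTm σ p.2))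

/-- if τ unifies (var x, t)::E then τ agrees with sub1 x t ; τ pointwise -/
lemma sub1_then (τ : ℕ → Tm F ar) {x : ℕ} {t : Tm F ar}
    (h : τ x = substTm τ t) :
    (fun v => substTm τ (sub1 x t v)) = τ := by
  funext v
  by_cases hv : v = x
  · subst hv; simp [sub1_self, h]
  · simp [sub1_ne _ hv, substTm]

lemma unif_mapSub {τ : ℕ → Tm F ar} {x : ℕ} {t : Tm F ar} {E}
    (hhead : τ x = substTm τ t) (hE : Unif τ E) : Unif τ (mapSub (sub1 x t) E) := by
  intro p hp
  simp only [mapSub, List.mem_map] at hp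
  obtain ⟨q, hq, rfl⟩ := hp
  rw [substTm_comp, substTm_comp, sub1_then τ hhead]
  exact hE q hq

lemma card_elim {x : ℕ} {t : Tm F ar} (hx : x ∉ varsTm t) (E : List (Tm F ar × Tm F ar)) :
    (varsE (mapSub (sub1 x t) E)).card < (varsE ((Tm.var x, t) :: E)).card := by
  have key : ∀ (v : ℕ) (u : Tm F ar), v ∈ varsTm (substTm (sub1 x t) u) →
      (v ∈ varsTm t ∨ v ∈ varsTm u) ∧ v ≠ x := by
    intro v u hu
    obtain ⟨w, hw, hvw⟩ := vars_subst _ _ hu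
    by_cases hwx : w = x
    · rw [hwx, sub1_self] at hvw
      exact ⟨Or.inl hvw, fun hvx => hx (hvx ▸ hvw)⟩
    · rw [sub1_ne _ hwx] at hvw
      simp [varsTm] at hvw
      subst hvw
      exact ⟨Or.inr hw, hwx⟩
  apply Finset.card_lt_card
  constructor
  · intro v hv
    rw [mem_varsE] at hv
    obtain ⟨p, hp, hv⟩ := hv
    simp only [mapSub, List.mem_map] at hp
    obtain ⟨q, hq, rfl⟩ := hp
    rw [mem_varsE]
    rcases hv with hv | hv
    · rcases (key v q.1 hv).1 with h | h
      · exact ⟨(Tm.var x, t), by simp, Or.inr h⟩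
      · exact ⟨q, by simp [hq], Or.inl h⟩
    · rcases (key v q.2 hv).1 with h | h
      · exact ⟨(Tm.var x, t), by simp, Or.inr h⟩
      · exact ⟨q, by simp [hq], Or.inr h⟩
  · intro hsub
    have hx1 : x ∈ varsE ((Tm.var x, t) :: E) := by
      rw [mem_varsE]; exact ⟨(Tm.var x, t), by simp, Or.inl (by simp [varsTm])⟩
    have hx2 := hsub hx1
    rw [mem_varsE] at hx2
    obtain ⟨p, hp, hv⟩ := hx2
    simp only [mapSub, List.mem_map] at hp
    obtain ⟨q, hq, rfl⟩ := hp
    rcases hv with hv | hv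
    · exact (key x q.1 hv).2 rfl
    · exact (key x q.2 hv).2 rfl

lemma subst_sub1_eq_self {x : ℕ} {t : Tm F ar} (hx : x ∉ varsTm t) :
    substTm (sub1 x t) t = t := by
  rw [substTm_congr t (σ' := Tm.var) (fun v hv => sub1_ne _ (fun h => hx (by rw [← h]; exact hv))),
    substTm_var_id]

lemma elim_step {x : ℕ} {t : Tm F ar} (hx : x ∉ varsTm t) {E : List (Tm F ar × Tm F ar)}
    {σ' : ℕ → Tm F ar} (h : IsMGU (mapSub (sub1 x t) E) σ') :
    IsMGU ((Tm.var x, t) :: E) (fun v => substTm σ' (sub1 x t v)) := by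
  set σ : ℕ → Tm F ar := fun v => substTm σ' (sub1 x t v) with hσ
  have hcomp : ∀ u : Tm F ar, substTm σ u = substTm σ' (substTm (sub1 x t) u) := by
    intro u; rw [substTm_comp]
  constructor
  · intro p hp
    rcases List.mem_cons.mp hp with rfl | hp
    · show substTm σ (Tm.var x) = substTm σ t
      rw [hcomp, hcomp, subst_sub1_eq_self hx]
      show substTm σ' (substTm (sub1 x t) (Tm.var x)) = _
      simp [substTm, sub1_self]
    · rw [hcomp, hcomp]
      exact h.1 _ (by simp only [mapSub, List.mem_map]; exact ⟨p, hp, rfl⟩)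
  · intro τ hτ
    have hhead : τ x = substTm τ t := hτ (Tm.var x, t) (by simp)
    have hτ' : Unif τ (mapSub (sub1 x t) E) :=
      unif_mapSub hhead (fun p hp => hτ p (List.mem_cons_of_mem _ hp))
    obtain ⟨ρ, hρ⟩ := h.2 τ hτ'
    refine ⟨ρ, fun v => ?_⟩
    have hfun : (fun w => substTm ρ (σ' w)) = τ := by funext w; exact (hρ w).symm
    calc τ v = substTm τ (sub1 x t v) := (congrFun (sub1_then τ hhead) v).symm
    _ = substTm (fun w => substTm ρ (σ' w)) (sub1 x t v) := by rw [hfun]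
    _ = substTm ρ (σ v) := by rw [hσ, ← substTm_comp]

lemma occurs_check {x : ℕ} {f : F} {a : Fin (ar f) → Tm F ar}
    (hx : x ∈ varsTm (Tm.fn f a)) (τ : ℕ → Tm F ar) :
    substTm τ (Tm.var x) ≠ substTm τ (Tm.fn f a) := by
  intro heq
  simp [varsTm] at hx
  obtain ⟨i, hi⟩ := hx
  have h1 : sizeTm (τ x) ≤ sizeTm (substTm τ (a i)) := size_le_subst τ hi
  have h2 : sizeTm (substTm τ (a i)) < sizeTm (substTm τ (Tm.fn f a)) := by
    simp only [substTm, sizeTm]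
    have := Finset.single_le_sum (f := fun j => sizeTm (substTm τ (a j)))
      (fun j _ => Nat.zero_le _) (Finset.mem_univ i)
    omega
  have h3 : substTm τ (Tm.var x) = τ x := rfl
  rw [← heq, h3] at h2
  omega

lemma unif_fn_iff {τ : ℕ → Tm F ar} {f : F} {a b : Fin (ar f) → Tm F ar} :
    substTm τ (.fn f a) = substTm τ (.fn f b) ↔ ∀ i, substTm τ (a i) = substTm τ (b i) := by
  simp only [substTm, Tm.fn.injEq, heq_eq_eq, true_and]
  constructor
  · intro h i; exact congrFun h i
  · intro h; funext i; exact h i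

lemma unif_ofFn_append {τ : ℕ → Tm F ar} {f : F} {a b : Fin (ar f) → Tm F ar}
    {E : List (Tm F ar × Tm F ar)} :
    Unif τ (List.ofFn (fun i => (a i, b i)) ++ E) ↔
      (∀ i, substTm τ (a i) = substTm τ (b i)) ∧ Unif τ E := by
  constructor
  · intro h
    refine ⟨fun i => h (a i, b i) (List.mem_append_left _ (List.mem_ofFn.mpr ⟨i, rfl⟩)), fun p hp => h p (List.mem_append_right _ hp)⟩
  · rintro ⟨h1, h2⟩ p hp
    rcases List.mem_append.mp hp with hp | hp
    · obtain ⟨i, rfl⟩ := List.mem_ofFn.mp hp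
      exact h1 i
    · exact h2 p hp

lemma sizeE_append (L1 L2 : List (Tm F ar × Tm F ar)) :
    sizeE (L1 ++ L2) = sizeE L1 + sizeE L2 := by
  induction L1 with
  | nil => simp [sizeE]
  | cons p L ih => simp [sizeE, ih]; omega

lemma sizeE_eq_sum (L : List (Tm F ar × Tm F ar)) :
    sizeE L = (L.map (fun p => sizeTm p.1 + sizeTm p.2)).sum := by
  induction L with
  | nil => simp [sizeE]
  | cons p L ih => simp [sizeE, ih]

lemma sizeE_ofFn {f : F} (a b : Fin (ar f) → Tm F ar) :
    sizeE (List.ofFn (fun i => (a i, b i))) = ∑ i, (sizeTm (a i) + sizeTm (b i)) := by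
  rw [sizeE_eq_sum, List.map_ofFn, List.sum_ofFn]
  rfl

lemma varsE_sub_cons (p : Tm F ar × Tm F ar) (E : List (Tm F ar × Tm F ar)) :
    varsE E ⊆ varsE (p :: E) := by
  intro v hv
  rw [mem_varsE] at hv ⊢
  obtain ⟨q, hq, h⟩ := hv
  exact ⟨q, List.mem_cons_of_mem _ hq, h⟩

lemma varsE_fn_case {f : F} (a b : Fin (ar f) → Tm F ar) (E : List (Tm F ar × Tm F ar)) :
    varsE (List.ofFn (fun i => (a i, b i)) ++ E) ⊆ varsE ((Tm.fn f a, Tm.fn f b) :: E) := by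
  intro v hv
  rw [mem_varsE] at hv ⊢
  obtain ⟨q, hq, h⟩ := hv
  rcases List.mem_append.mp hq with hq | hq
  · obtain ⟨i, rfl⟩ := List.mem_ofFn.mp hq
    refine ⟨(Tm.fn f a, Tm.fn f b), by simp, ?_⟩
    rcases h with h | h
    · exact Or.inl (by simp [varsTm]; exact ⟨i, h⟩)
    · exact Or.inr (by simp [varsTm]; exact ⟨i, h⟩)
  · exact ⟨q, List.mem_cons_of_mem _ hq, h⟩

lemma isMGU_swap_head {s t : Tm F ar} {E : List (Tm F ar × Tm F ar)} {σ : ℕ → Tm F ar}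
    (h : IsMGU ((s, t) :: E) σ) : IsMGU ((t, s) :: E) σ := by
  have swap : ∀ τ : ℕ → Tm F ar, Unif τ ((t, s) :: E) → Unif τ ((s, t) :: E) := by
    intro τ hτ p hp
    rcases List.mem_cons.mp hp with rfl | hp
    · exact (hτ (t, s) (by simp)).symm
    · exact hτ p (List.mem_cons_of_mem _ hp)
  constructor
  · intro p hp
    rcases List.mem_cons.mp hp with rfl | hp
    · exact (h.1 (s, t) (by simp)).symm
    · exact h.1 p (List.mem_cons_of_mem _ hp)
  · intro τ hτ
    exact h.2 τ (swap τ hτ)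

theorem mgu_list (n : ℕ) : ∀ (m : ℕ) (E : List (Tm F ar × Tm F ar)),
    (varsE E).card < n → sizeE E < m → (∃ τ, Unif τ E) → ∃ σ, IsMGU E σ := by
  induction n with
  | zero => intro m E h; omega
  | succ n ihn =>
    intro m
    induction m with
    | zero => intro E _ h; omega
    | succ m ihm =>
      intro E hn hm hu
      rcases E with _ | ⟨⟨s, t⟩, E'⟩
      · exact ⟨Tm.var, fun p hp => absurd hp List.not_mem_nil,
          fun τ _ => ⟨τ, fun v => rfl⟩⟩
      rcases s with x | ⟨f, a⟩
      · -- head is (var x, t)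
        by_cases hx : x ∈ varsTm t
        · rcases t with y | ⟨g, b⟩
          · -- (var x, var y) with x ∈ {y}, so y = x
            simp [varsTm] at hx
            subst hx
            have hsz : sizeE E' < m := by
              simp [sizeE, sizeTm] at hm; omega
            have hcard : (varsE E').card < n + 1 :=
              lt_of_le_of_lt (Finset.card_le_card (varsE_sub_cons _ _)) hn
            obtain ⟨τ0, hτ0⟩ := hu
            obtain ⟨σ, hσ⟩ := ihm E' hcard hsz
              ⟨τ0, fun p hp => hτ0 p (List.mem_cons_of_mem _ hp)⟩
            refine ⟨σ, ?_, ?_⟩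
            · intro p hp
              rcases List.mem_cons.mp hp with rfl | hp
              · rfl
              · exact hσ.1 p hp
            · intro τ hτ
              exact hσ.2 τ (fun p hp => hτ p (List.mem_cons_of_mem _ hp))
          · -- (var x, fn g b) with occurs check failure
            exfalso
            obtain ⟨τ0, hτ0⟩ := hu
            exact occurs_check hx τ0 (hτ0 (Tm.var x, Tm.fn g b) (by simp))
        · -- variable elimination
          obtain ⟨τ0, hτ0⟩ := hu
          have hhead : τ0 x = substTm τ0 t := hτ0 (Tm.var x, t) (by simp)
          have hcard := card_elim hx E'
          obtain ⟨σ', hσ'⟩ := ihn (sizeE (mapSub (sub1 x t) E') + 1) (mapSub (sub1 x t) E')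
            (by omega) (Nat.lt_succ_self _)
            ⟨τ0, unif_mapSub hhead (fun p hp => hτ0 p (List.mem_cons_of_mem _ hp))⟩
          exact ⟨_, elim_step hx hσ'⟩
      · rcases t with x | ⟨g, b⟩
        · -- head is (fn f a, var x) : symmetric case
          by_cases hx : x ∈ varsTm (Tm.fn f a)
          · exfalso
            obtain ⟨τ0, hτ0⟩ := hu
            exact occurs_check hx τ0 (hτ0 (Tm.fn f a, Tm.var x) (by simp)).symm
          · obtain ⟨τ0, hτ0⟩ := hu
            have hhead : τ0 x = substTm τ0 (Tm.fn f a) :=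
              (hτ0 (Tm.fn f a, Tm.var x) (by simp)).symm
            have hveq : varsE ((Tm.var x, Tm.fn f a) :: E') = varsE ((Tm.fn f a, Tm.var x) :: E') := by
              show varsTm (Tm.var x) ∪ varsTm (Tm.fn f a) ∪ varsE E' = _
              rw [Finset.union_comm (varsTm (Tm.var x))]
              rfl
            have hcard := card_elim hx E'
            rw [hveq] at hcard
            obtain ⟨σ', hσ'⟩ := ihn (sizeE (mapSub (sub1 x (Tm.fn f a)) E') + 1)
              (mapSub (sub1 x (Tm.fn f a)) E')
              (by omega) (Nat.lt_succ_self _)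
              ⟨τ0, unif_mapSub hhead (fun p hp => hτ0 p (List.mem_cons_of_mem _ hp))⟩
            exact ⟨_, isMGU_swap_head (elim_step hx hσ')⟩
        · -- head is (fn f a, fn g b)
          obtain ⟨τ0, hτ0⟩ := hu
          have hhead := hτ0 (Tm.fn f a, Tm.fn g b) (by simp)
          simp only [substTm] at hhead
          have hfg : f = g := by injection hhead
          subst hfg
          set E'' := List.ofFn (fun i => (a i, b i)) ++ E' with hE''
          have hcard : (varsE E'').card < n + 1 :=
            lt_of_le_of_lt (Finset.card_le_card (varsE_fn_case a b E')) hn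
          have hsz : sizeE E'' < m := by
            have h1 : sizeE E'' = (∑ i, (sizeTm (a i) + sizeTm (b i))) + sizeE E' := by
              rw [hE'', sizeE_append, sizeE_ofFn]
            have h2 : sizeE ((Tm.fn f a, Tm.fn f b) :: E') =
                (1 + ∑ i, sizeTm (a i)) + (1 + ∑ i, sizeTm (b i)) + sizeE E' := rfl
            have h3 : ∑ i, (sizeTm (a i) + sizeTm (b i)) =
                (∑ i, sizeTm (a i)) + ∑ i, sizeTm (b i) := Finset.sum_add_distrib
            omega
          have hτ0head : ∀ i, substTm τ0 (a i) = substTm τ0 (b i) :=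
            unif_fn_iff.mp (hτ0 (Tm.fn f a, Tm.fn f b) (by simp))
          obtain ⟨σ, hσ⟩ := ihm E'' hcard hsz
            ⟨τ0, unif_ofFn_append.mpr ⟨hτ0head, fun p hp => hτ0 p (List.mem_cons_of_mem _ hp)⟩⟩
          have hσE'' := unif_ofFn_append.mp hσ.1
          refine ⟨σ, ?_, ?_⟩
          · intro p hp
            rcases List.mem_cons.mp hp with rfl | hp
            · exact unif_fn_iff.mpr hσE''.1
            · exact hσE''.2 p hp
          · intro τ hτ
            refine hσ.2 τ (unif_ofFn_append.mpr ⟨?_, fun p hp => hτ p (List.mem_cons_of_mem _ hp)⟩)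
            exact unif_fn_iff.mp (hτ (Tm.fn f a, Tm.fn f b) (by simp))


/-- Any two unifiable first-order terms have a most general
unifier: if some substitution `τ` unifies `s` and `t`, then there is a unifier
`σ` of `s` and `t` such that every unifier `τ` factors through `σ` on the
variables of `s` and `t` (i.e. `τ = σ ∘ ρ` there, applying `σ` first). -/
theorem stmt16 {F : Type} {ar : F → ℕ} (s t : Tm F ar)
    (h : ∃ τ : ℕ → Tm F ar, substTm τ s = substTm τ t) :
    ∃ σ : ℕ → Tm F ar, substTm σ s = substTm σ t ∧
      ∀ τ : ℕ → Tm F ar, substTm τ s = substTm τ t →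
        ∃ ρ : ℕ → Tm F ar, ∀ v ∈ fvTm s ∪ fvTm t, τ v = substTm ρ (σ v) := by
  obtain ⟨τ0, hτ0⟩ := h
  obtain ⟨σ, hσ⟩ := mgu_list ((varsE [(s, t)]).card + 1) (sizeE [(s, t)] + 1) [(s, t)]
    (Nat.lt_succ_self _) (Nat.lt_succ_self _)
    ⟨τ0, fun p hp => by
      rcases List.mem_cons.mp hp with rfl | hp
      · exact hτ0
      · exact absurd hp List.not_mem_nil⟩
  refine ⟨σ, hσ.1 (s, t) (by simp), fun τ hτ => ?_⟩
  obtain ⟨ρ, hρ⟩ := hσ.2 τ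
    (fun p hp => by
      rcases List.mem_cons.mp hp with rfl | hp
      · exact hτ
      · exact absurd hp List.not_mem_nil)
  exact ⟨ρ, fun v _ => hρ v⟩
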